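/- The explicit 4-coloring of the unit sphere S² defined by A₁ = {(x,y,z) ∈ S² : x>0, y≥0, z≥0}, A₂ = {(x,y,z) ∈ S² : x≤0, y>0, z≥0}, A₃ = {(x,y,z) ∈ S² : x≤0, y≤0, z>0}, A₄ = {(x,y,z) ∈ S² : x>0, y<0, z>0}, with color classes Eᵢ = Aᵢ ∪ (−Aᵢ), is an orthogonal coloring: the Eᵢ are pairwise disjoint, nonempty, their union is S², and no Eᵢ contains two points u, v with u·v = 0. -/

import Mathlib

theorem stmt_0 (A : Fin 4 → Set (EuclideanSpace ℝ (Fin 3)))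
    (hA0 : A 0 = {x | ‖x‖ = 1 ∧ x 0 > 0 ∧ x 1 ≥ 0 ∧ x 2 ≥ 0})
    (hA1 : A 1 = {x | ‖x‖ = 1 ∧ x 0 ≤ 0 ∧ x 1 > 0 ∧ x 2 ≥ 0})
    (hA2 : A 2 = {x | ‖x‖ = 1 ∧ x 0 ≤ 0 ∧ x 1 ≤ 0 ∧ x 2 > 0})
    (hA3 : A 3 = {x | ‖x‖ = 1 ∧ x 0 > 0 ∧ x 1 < 0 ∧ x 2 > 0})
    (E : Fin 4 → Set (EuclideanSpace ℝ (Fin 3)))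
    (hE : ∀ i, E i = A i ∪ (-(A i))) :
    (∀ i j, i ≠ j → Disjoint (E i) (E j)) ∧
    (∀ i, (E i).Nonempty) ∧
    (⋃ i, E i) = {x : EuclideanSpace ℝ (Fin 3) | ‖x‖ = 1} ∧
    (∀ i, ∀ u ∈ E i, ∀ v ∈ E i, (inner ℝ u v : ℝ) ≠ 0) := by
  have hinner : ∀ u v : EuclideanSpace ℝ (Fin 3),
      (inner ℝ u v : ℝ) = u 0 * v 0 + u 1 * v 1 + u 2 * v 2 := by
    intro u v
    simp [PiLp.inner_apply, RCLike.inner_apply, Fin.sum_univ_three]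
    ring
  refine ⟨?_, ?_, ?_, ?_⟩
  · intro i j hij
    rw [Set.disjoint_left]
    intro x hxi hxj
    rw [hE] at hxi hxj
    have hi : i = 0 ∨ i = 1 ∨ i = 2 ∨ i = 3 := by omega
    have hj : j = 0 ∨ j = 1 ∨ j = 2 ∨ j = 3 := by omega
    rcases hi with rfl | rfl | rfl | rfl <;> rcases hj with rfl | rfl | rfl | rfl <;>
      first
      | exact hij rfl
      | (rcases hxi with h1 | h1 <;> rcases hxj with h2 | h2 <;>
          simp only [hA0, hA1, hA2, hA3, Set.mem_neg, Set.mem_setOf_eq,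
            PiLp.neg_apply, neg_pos, neg_nonneg, neg_nonpos, neg_neg] at h1 h2 <;>
          linarith [h1.2.1, h1.2.2.1, h1.2.2.2, h2.2.1, h2.2.2.1, h2.2.2.2])
  · intro i
    have hi : i = 0 ∨ i = 1 ∨ i = 2 ∨ i = 3 := by omega
    rcases hi with rfl | rfl | rfl | rfl
    · refine ⟨(WithLp.equiv 2 (Fin 3 → ℝ)).symm ![1, 0, 0], ?_⟩
      rw [hE]; left; rw [hA0]
      refine ⟨?_, by norm_num, by norm_num, by norm_num [Matrix.cons_val_two, Matrix.vecHead, Matrix.vecTail]⟩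
      simp [EuclideanSpace.norm_eq, Fin.sum_univ_three]
    · refine ⟨(WithLp.equiv 2 (Fin 3 → ℝ)).symm ![0, 1, 0], ?_⟩
      rw [hE]; left; rw [hA1]
      refine ⟨?_, by norm_num, by norm_num, by norm_num [Matrix.cons_val_two, Matrix.vecHead, Matrix.vecTail]⟩
      simp [EuclideanSpace.norm_eq, Fin.sum_univ_three]
    · refine ⟨(WithLp.equiv 2 (Fin 3 → ℝ)).symm ![0, 0, 1], ?_⟩
      rw [hE]; left; rw [hA2]
      refine ⟨?_, by norm_num, by norm_num, by norm_num [Matrix.cons_val_two, Matrix.vecHead, Matrix.vecTail]⟩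
      simp [EuclideanSpace.norm_eq, Fin.sum_univ_three]
    · refine ⟨(WithLp.equiv 2 (Fin 3 → ℝ)).symm ![2/3, -1/3, 2/3], ?_⟩
      rw [hE]; left; rw [hA3]
      refine ⟨?_, by norm_num, by norm_num, by norm_num [Matrix.cons_val_two, Matrix.vecHead, Matrix.vecTail]⟩
      simp [EuclideanSpace.norm_eq, Fin.sum_univ_three]
      norm_num
  · ext x
    simp only [Set.mem_iUnion, Set.mem_setOf_eq]
    constructor
    · rintro ⟨i, hx⟩
      rw [hE] at hx
      have hi : i = 0 ∨ i = 1 ∨ i = 2 ∨ i = 3 := by omega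
      rcases hi with rfl | rfl | rfl | rfl <;> rcases hx with hx | hx <;>
        simp only [hA0, hA1, hA2, hA3, Set.mem_neg, Set.mem_setOf_eq, norm_neg] at hx <;>
        exact hx.1
    · intro hx
      have hne : ¬ (x 0 = 0 ∧ x 1 = 0 ∧ x 2 = 0) := by
        rintro ⟨h0, h1, h2⟩
        rw [EuclideanSpace.norm_eq] at hx
        simp [Fin.sum_univ_three, h0, h1, h2] at hx
      have hnx : ‖-x‖ = 1 := by rwa [norm_neg]
      rcases lt_or_ge 0 (x 0) with ha | ha
      · rcases lt_or_ge (x 1) 0 with hb | hb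
        · rcases lt_or_ge 0 (x 2) with hc | hc
          · exact ⟨3, by rw [hE]; exact Or.inl (by rw [hA3]; exact ⟨hx, ha, hb, hc⟩)⟩
          · refine ⟨1, ?_⟩
            rw [hE]; right; rw [Set.mem_neg, hA1]
            refine ⟨hnx, ?_, ?_, ?_⟩ <;> simp only [PiLp.neg_apply] <;> linarith
        · rcases lt_or_ge (x 2) 0 with hc | hc
          · refine ⟨2, ?_⟩
            rw [hE]; right; rw [Set.mem_neg, hA2]
            refine ⟨hnx, ?_, ?_, ?_⟩ <;> simp only [PiLp.neg_apply] <;> linarith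
          · exact ⟨0, by rw [hE]; exact Or.inl (by rw [hA0]; exact ⟨hx, ha, hb, hc⟩)⟩
      · rcases lt_or_ge 0 (x 1) with hb | hb
        · rcases lt_or_ge (x 2) 0 with hc | hc
          · rcases lt_or_eq_of_le ha with ha' | ha'
            · refine ⟨3, ?_⟩
              rw [hE]; right; rw [Set.mem_neg, hA3]
              refine ⟨hnx, ?_, ?_, ?_⟩ <;> simp only [PiLp.neg_apply] <;> linarith
            · refine ⟨2, ?_⟩
              rw [hE]; right; rw [Set.mem_neg, hA2]
              refine ⟨hnx, ?_, ?_, ?_⟩ <;> simp only [PiLp.neg_apply] <;> linarith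
          · exact ⟨1, by rw [hE]; exact Or.inl (by rw [hA1]; exact ⟨hx, ha, hb, hc⟩)⟩
        · rcases lt_or_ge 0 (x 2) with hc | hc
          · exact ⟨2, by rw [hE]; exact Or.inl (by rw [hA2]; exact ⟨hx, ha, hb, hc⟩)⟩
          · rcases lt_or_eq_of_le ha with ha' | ha'
            · refine ⟨0, ?_⟩
              rw [hE]; right; rw [Set.mem_neg, hA0]
              refine ⟨hnx, ?_, ?_, ?_⟩ <;> simp only [PiLp.neg_apply] <;> linarith
            · rcases lt_or_eq_of_le hb with hb' | hb'
              · refine ⟨1, ?_⟩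
                rw [hE]; right; rw [Set.mem_neg, hA1]
                refine ⟨hnx, ?_, ?_, ?_⟩ <;> simp only [PiLp.neg_apply] <;> linarith
              · rcases lt_or_eq_of_le hc with hc' | hc'
                · refine ⟨2, ?_⟩
                  rw [hE]; right; rw [Set.mem_neg, hA2]
                  refine ⟨hnx, ?_, ?_, ?_⟩ <;> simp only [PiLp.neg_apply] <;> linarith
                · exact absurd ⟨ha', hb', hc'⟩ hne
  · intro i u hu v hv
    rw [hE] at hu hv
    rw [hinner]
    intro h
    have hi : i = 0 ∨ i = 1 ∨ i = 2 ∨ i = 3 := by omega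
    rcases hi with rfl | rfl | rfl | rfl <;>
      rcases hu with hu | hu <;> rcases hv with hv | hv <;>
        simp only [hA0, hA1, hA2, hA3, Set.mem_neg, Set.mem_setOf_eq,
          PiLp.neg_apply, neg_pos, neg_nonneg, neg_nonpos, neg_neg] at hu hv <;>
        obtain ⟨-, a0, a1, a2⟩ := hu <;> obtain ⟨-, b0, b1, b2⟩ := hv <;>
        nlinarith [h, a0, a1, a2, b0, b1, b2]
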